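/- Let H be a real Hilbert space and define f : H → H by f(x) = x + x^⊥ for ‖x‖ ≤ 1/2 and f(x) = x/‖x‖ - x + x^⊥ for ‖x‖ ≥ 1/2, where in H = ℝ² one sets (x₁,x₂)^⊥ = (-x₂,x₁). Then f is Lipschitz continuous with Lipschitz constant 5, but f is not nonexpansive. -/

import Mathlib

open scoped RealInnerProductSpace

noncomputable def perpCM (x : EuclideanSpace ℝ (Fin 2)) : EuclideanSpace ℝ (Fin 2) :=
  (WithLp.equiv 2 (Fin 2 → ℝ)).symm ![-(x 1), x 0]

noncomputable def chidumeMutangadura (x : EuclideanSpace ℝ (Fin 2)) :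
    EuclideanSpace ℝ (Fin 2) :=
  if ‖x‖ ≤ 1/2 then x + perpCM x else ‖x‖⁻¹ • x - x + perpCM x

noncomputable def gCM (x : EuclideanSpace ℝ (Fin 2)) : EuclideanSpace ℝ (Fin 2) :=
  if ‖x‖ ≤ 1/2 then x else ‖x‖⁻¹ • x - x

lemma chid_eq (x : EuclideanSpace ℝ (Fin 2)) :
    chidumeMutangadura x = gCM x + perpCM x := by
  unfold chidumeMutangadura gCM
  split_ifs <;> rfl

lemma perp_sub (x y : EuclideanSpace ℝ (Fin 2)) :
    perpCM x - perpCM y = perpCM (x - y) := by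
  ext i
  fin_cases i <;>
    simp [perpCM, WithLp.equiv_symm_apply, PiLp.sub_apply] <;> ring

lemma perp_norm (x : EuclideanSpace ℝ (Fin 2)) : ‖perpCM x‖ = ‖x‖ := by
  rw [EuclideanSpace.norm_eq, EuclideanSpace.norm_eq]
  congr 1
  simp [perpCM, WithLp.equiv_symm_apply, Fin.sum_univ_two]
  ring

lemma perp_lip : LipschitzWith 1 perpCM := by
  apply LipschitzWith.of_dist_le_mul
  intro x y
  rw [dist_eq_norm, dist_eq_norm, perp_sub, perp_norm]
  simp

-- radial projection estimate
lemma radial (x y : EuclideanSpace ℝ (Fin 2)) (hx : 1/2 ≤ ‖x‖) (hy : 1/2 ≤ ‖y‖) :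
    ‖‖x‖⁻¹ • x - ‖y‖⁻¹ • y‖ ≤ 2 * ‖x - y‖ := by
  have hx0 : (0:ℝ) < ‖x‖ := lt_of_lt_of_le (by norm_num) hx
  have hy0 : (0:ℝ) < ‖y‖ := lt_of_lt_of_le (by norm_num) hy
  have hxy : x ≠ 0 := by intro h; rw [h, norm_zero] at hx0; exact lt_irrefl _ hx0
  have hyy : y ≠ 0 := by intro h; rw [h, norm_zero] at hy0; exact lt_irrefl _ hy0
  have cs : ⟪x, y⟫ ≤ ‖x‖ * ‖y‖ := real_inner_le_norm x y
  have h1 : ‖‖x‖⁻¹ • x - ‖y‖⁻¹ • y‖ ^ 2 = 2 - 2 * (⟪x, y⟫ / (‖x‖ * ‖y‖)) := by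
    rw [norm_sub_sq_real]
    rw [norm_smul, norm_smul, real_inner_smul_left, real_inner_smul_right]
    simp [abs_of_pos, hx0.le, hy0.le, hx0.ne', hy0.ne']
    field_simp
    ring
  have h2 : ‖x - y‖ ^ 2 = ‖x‖^2 - 2 * ⟪x, y⟫ + ‖y‖^2 := norm_sub_sq_real x y
  have key : ‖‖x‖⁻¹ • x - ‖y‖⁻¹ • y‖ ^ 2 ≤ (2 * ‖x - y‖) ^ 2 := by
    rw [h1]
    have hab : (1:ℝ)/4 ≤ ‖x‖ * ‖y‖ := by nlinarith
    have habpos : (0:ℝ) < ‖x‖ * ‖y‖ := by positivity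
    have h3 : (‖x‖ * ‖y‖ - ⟪x, y⟫) / (‖x‖ * ‖y‖) ≤ 4 * (‖x‖ * ‖y‖ - ⟪x, y⟫) := by
      rw [div_le_iff₀ habpos]; nlinarith
    have h4 : 2 - 2 * (⟪x, y⟫ / (‖x‖ * ‖y‖)) =
        2 * ((‖x‖ * ‖y‖ - ⟪x, y⟫) / (‖x‖ * ‖y‖)) := by field_simp
    rw [h4]
    nlinarith [sq_nonneg (‖x‖ - ‖y‖)]
  nlinarith [norm_nonneg (‖x‖⁻¹ • x - ‖y‖⁻¹ • y), norm_nonneg (x - y)]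

lemma g_outer (x y : EuclideanSpace ℝ (Fin 2)) (hx : 1/2 ≤ ‖x‖) (hy : 1/2 ≤ ‖y‖) :
    ‖(‖x‖⁻¹ • x - x) - (‖y‖⁻¹ • y - y)‖ ≤ 3 * ‖x - y‖ := by
  have h1 : (‖x‖⁻¹ • x - x) - (‖y‖⁻¹ • y - y) = (‖x‖⁻¹ • x - ‖y‖⁻¹ • y) - (x - y) := by
    abel
  rw [h1]
  calc ‖(‖x‖⁻¹ • x - ‖y‖⁻¹ • y) - (x - y)‖
      ≤ ‖‖x‖⁻¹ • x - ‖y‖⁻¹ • y‖ + ‖x - y‖ := norm_sub_le _ _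
    _ ≤ 2 * ‖x - y‖ + ‖x - y‖ := by linarith [radial x y hx hy]
    _ = 3 * ‖x - y‖ := by ring

lemma g_boundary (z : EuclideanSpace ℝ (Fin 2)) (hz : ‖z‖ = 1/2) :
    ‖z‖⁻¹ • z - z = z := by
  rw [hz]
  norm_num
  rw [show ((2:ℝ) • z) = z + z from two_smul ℝ z]
  abel

lemma gCM_bound (x y : EuclideanSpace ℝ (Fin 2)) (hx : ‖x‖ ≤ 1/2) (hy : ¬ ‖y‖ ≤ 1/2) :
    ‖x - (‖y‖⁻¹ • y - y)‖ ≤ 3 * ‖x - y‖ := by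
  -- find z on segment [x,y] with ‖z‖ = 1/2
  have hcont : ContinuousOn (fun t : ℝ => ‖x + t • (y - x)‖) (Set.Icc 0 1) := by
    fun_prop
  have hiv := intermediate_value_Icc (by norm_num : (0:ℝ) ≤ 1) hcont
  have hmem : (1/2 : ℝ) ∈ Set.Icc ‖x + (0:ℝ) • (y - x)‖ ‖x + (1:ℝ) • (y - x)‖ := by
    simp only [zero_smul, add_zero, one_smul]
    constructor
    · simpa using hx
    · have : x + (y - x) = y := by abel
      rw [this]
      exact le_of_lt (lt_of_not_ge hy)
  obtain ⟨t, ht, hzt⟩ := hiv hmem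
  set z := x + t • (y - x) with hzdef
  have hz : ‖z‖ = 1/2 := hzt
  have ht0 : (0:ℝ) ≤ t := ht.1
  have ht1 : t ≤ 1 := ht.2
  have hxz : ‖x - z‖ = t * ‖x - y‖ := by
    have : x - z = (-t) • (y - x) := by rw [hzdef]; module
    rw [this, norm_smul, norm_sub_rev y x]
    simp [abs_of_nonneg ht0]
  have hzy : ‖z - y‖ = (1 - t) * ‖x - y‖ := by
    have : z - y = (1 - t) • (x - y) := by rw [hzdef]; module
    rw [this, norm_smul]
    simp [abs_of_nonneg (by linarith : (0:ℝ) ≤ 1 - t)]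
  have step1 : ‖x - (‖y‖⁻¹ • y - y)‖ ≤ ‖x - z‖ + ‖z - (‖y‖⁻¹ • y - y)‖ := by
    calc ‖x - (‖y‖⁻¹ • y - y)‖ = ‖(x - z) + (z - (‖y‖⁻¹ • y - y))‖ := by abel_nf
      _ ≤ _ := norm_add_le _ _
  have step2 : ‖z - (‖y‖⁻¹ • y - y)‖ ≤ 3 * ‖z - y‖ := by
    have := g_outer z y (le_of_eq hz.symm) (le_of_lt (lt_of_not_ge hy))
    rwa [g_boundary z hz] at this
  calc ‖x - (‖y‖⁻¹ • y - y)‖ ≤ ‖x - z‖ + 3 * ‖z - y‖ := by linarith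
    _ = t * ‖x - y‖ + 3 * ((1 - t) * ‖x - y‖) := by rw [hxz, hzy]
    _ ≤ 3 * ‖x - y‖ := by nlinarith [norm_nonneg (x - y)]

lemma gCM_lip : LipschitzWith 4 gCM := by
  apply LipschitzWith.of_dist_le_mul
  intro x y
  rw [dist_eq_norm, dist_eq_norm]
  unfold gCM
  push_cast
  split_ifs with h1 h2 h2
  · nlinarith [norm_nonneg (x - y)]
  · have := gCM_bound x y h1 h2
    nlinarith [norm_nonneg (x - y)]
  · have := gCM_bound y x h2 h1
    rw [norm_sub_rev y, norm_sub_rev y x] at this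
    nlinarith [norm_nonneg (x - y)]
  · have := g_outer x y (le_of_lt (lt_of_not_ge h1)) (le_of_lt (lt_of_not_ge h2))
    nlinarith [norm_nonneg (x - y)]

theorem chidumeMutangadura_lipschitz_not_nonexpansive :
    LipschitzWith 5 chidumeMutangadura ∧
      ¬ ∀ x y : EuclideanSpace ℝ (Fin 2),
        ‖chidumeMutangadura x - chidumeMutangadura y‖ ≤ ‖x - y‖ := by
  constructor
  · have hf : chidumeMutangadura = fun x => gCM x + perpCM x := funext chid_eq
    rw [hf]
    have h := gCM_lip.add perp_lip
    norm_num at h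
    exact h
  · intro hcon
    set x₀ : EuclideanSpace ℝ (Fin 2) := (WithLp.equiv 2 (Fin 2 → ℝ)).symm ![1/2, 0] with hx₀
    have hx0 : x₀ 0 = 1/2 := rfl
    have hx1 : x₀ 1 = 0 := rfl
    have hnx : ‖x₀‖ = 1/2 := by
      rw [EuclideanSpace.norm_eq, Fin.sum_univ_two, hx0, hx1]
      rw [show ‖(1/2:ℝ)‖^2 + ‖(0:ℝ)‖^2 = (1/2)^2 by
        simp [Real.norm_eq_abs]]
      exact Real.sqrt_sq (by norm_num)
    have hperp0 : perpCM 0 = 0 := by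
      ext i; fin_cases i <;> simp [perpCM]
    have hf0 : chidumeMutangadura 0 = 0 := by
      rw [chidumeMutangadura]
      simp [hperp0]
    have hfx : chidumeMutangadura x₀ = x₀ + perpCM x₀ := by
      rw [chidumeMutangadura, if_pos (le_of_eq hnx)]
    have := hcon x₀ 0
    rw [hf0, hfx, sub_zero, sub_zero, hnx] at this
    have hns : ‖x₀ + perpCM x₀‖ = Real.sqrt (1/2) := by
      rw [EuclideanSpace.norm_eq, Fin.sum_univ_two]
      congr 1
      have hp0 : (perpCM x₀) 0 = 0 := by simp [perpCM, hx1]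
      have hp1 : (perpCM x₀) 1 = 1/2 := by simp [perpCM, hx0]
      rw [PiLp.add_apply, PiLp.add_apply, hx0, hx1, hp0, hp1]
      norm_num
    rw [hns] at this
    have h12 : (1/2 : ℝ) < Real.sqrt (1/2) := by
      have h := Real.sq_sqrt (by norm_num : (0:ℝ) ≤ 1/2)
      nlinarith [Real.sqrt_nonneg (1/2:ℝ)]
    linarith
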